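/- arXiv:2007.02693 — 4 statements merged into one kernel-verified Lean document; each statement's English description precedes it below -/
import Mathlib

section
/- Let L_T : ℝ^n × ℝ^m → ℝ be twice continuously differentiable with G(W, φ) the gradient of W ↦ L_T(W, φ), let W* : ℝ^m → ℝ^n be differentiable at φ̂ with G(W*(φ), φ) = 0 for all φ in a neighborhood of φ̂, let the Hessian H := D_W G(W*(φ̂), φ̂) be invertible, and let L_A : ℝ^n → ℝ be differentiable at W*(φ̂). Then φ ↦ L_A(W*(φ)) is differentiable at φ̂ and its derivative applied to any v ∈ ℝ^m equals −⟨∇L_A(W*(φ̂)), H⁻¹ (D_φ G(W*(φ̂), φ̂) v)⟩, where D_φ G is the partial derivative of G in φ and ⟨·,·⟩ is the Euclidean inner product. -/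
open scoped RealInnerProductSpace
open ContinuousLinearMap

/-- Hypergradient formula: with `G` the `W`-gradient of the training
loss, `W*` the stationary-point map and `H` the (invertible) Hessian in `W`,
`φ ↦ L_A(W*(φ))` is differentiable at `φ₀` and its derivative at `v` equals
`−⟨∇L_A(W*(φ₀)), H⁻¹ (D_φ G(W*(φ₀), φ₀) v)⟩`. -/
theorem stmt_2 (n m : ℕ)
    (LT : EuclideanSpace ℝ (Fin n) × EuclideanSpace ℝ (Fin m) → ℝ)
    (hLT : ContDiff ℝ 2 LT)
    (G : EuclideanSpace ℝ (Fin n) → EuclideanSpace ℝ (Fin m) → EuclideanSpace ℝ (Fin n))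
    (hG : ∀ W φ, G W φ = gradient (fun W' => LT (W', φ)) W)
    (Wstar : EuclideanSpace ℝ (Fin m) → EuclideanSpace ℝ (Fin n))
    (phi0 : EuclideanSpace ℝ (Fin m))
    (hWdiff : DifferentiableAt ℝ Wstar phi0)
    (hstat : ∀ᶠ φ in nhds phi0, G (Wstar φ) φ = 0)
    (H : EuclideanSpace ℝ (Fin n) ≃L[ℝ] EuclideanSpace ℝ (Fin n))
    (hH : (H : EuclideanSpace ℝ (Fin n) →L[ℝ] EuclideanSpace ℝ (Fin n)) =
      fderiv ℝ (fun W => G W phi0) (Wstar phi0))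
    (LA : EuclideanSpace ℝ (Fin n) → ℝ)
    (hLA : DifferentiableAt ℝ LA (Wstar phi0)) :
    DifferentiableAt ℝ (fun φ => LA (Wstar φ)) phi0 ∧
    ∀ v : EuclideanSpace ℝ (Fin m),
      fderiv ℝ (fun φ => LA (Wstar φ)) phi0 v =
        - ⟪gradient LA (Wstar phi0),
            H.symm (fderiv ℝ (fun φ => G (Wstar phi0) φ) phi0 v)⟫ := by
  have hLTdiff : Differentiable ℝ LT := hLT.differentiable (by norm_num)
  set F : (EuclideanSpace ℝ (Fin n)) × (EuclideanSpace ℝ (Fin m)) → (EuclideanSpace ℝ (Fin n)) := fun p => G p.1 p.2 with hF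
  set p0 : (EuclideanSpace ℝ (Fin n)) × (EuclideanSpace ℝ (Fin m)) := (Wstar phi0, phi0) with hp0
  have hFeq : ∀ p : (EuclideanSpace ℝ (Fin n)) × (EuclideanSpace ℝ (Fin m)), F p =
      (InnerProductSpace.toDual ℝ (EuclideanSpace ℝ (Fin n))).symm ((fderiv ℝ LT p).comp (inl ℝ (EuclideanSpace ℝ (Fin n)) (EuclideanSpace ℝ (Fin m)))) := by
    intro p
    have h1 : HasFDerivAt (fun W' : (EuclideanSpace ℝ (Fin n)) => LT (W', p.2))
        ((fderiv ℝ LT p).comp (inl ℝ (EuclideanSpace ℝ (Fin n)) (EuclideanSpace ℝ (Fin m)))) p.1 :=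
      (hLTdiff p).hasFDerivAt.comp p.1 (hasFDerivAt_prodMk_left p.1 p.2)
    show G p.1 p.2 = _
    rw [hG]
    unfold gradient
    rw [h1.fderiv]
  have hFdiff : Differentiable ℝ F := by
    have hd : Differentiable ℝ (fderiv ℝ LT) :=
      (hLT.fderiv_right (m := 1) (by norm_num)).differentiable (by norm_num)
    have h2 : Differentiable ℝ (fun p : (EuclideanSpace ℝ (Fin n)) × (EuclideanSpace ℝ (Fin m)) =>
        (InnerProductSpace.toDual ℝ (EuclideanSpace ℝ (Fin n))).symm ((fderiv ℝ LT p).comp (inl ℝ (EuclideanSpace ℝ (Fin n)) (EuclideanSpace ℝ (Fin m))))) := by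
      apply ((InnerProductSpace.toDual ℝ (EuclideanSpace ℝ (Fin n))).symm.toContinuousLinearEquiv.differentiable).comp
      exact (((compL ℝ (EuclideanSpace ℝ (Fin n)) ((EuclideanSpace ℝ (Fin n)) × (EuclideanSpace ℝ (Fin m))) ℝ).flip (inl ℝ (EuclideanSpace ℝ (Fin n)) (EuclideanSpace ℝ (Fin m)))).differentiable).comp hd
    exact fun p => ((h2 p).congr_of_eventuallyEq
      (Filter.Eventually.of_forall fun q => hFeq q))
  have hFd : DifferentiableAt ℝ F p0 := hFdiff p0
  -- partial derivatives
  have hWpart : HasFDerivAt (fun W : (EuclideanSpace ℝ (Fin n)) => G W phi0)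
      ((fderiv ℝ F p0).comp (inl ℝ (EuclideanSpace ℝ (Fin n)) (EuclideanSpace ℝ (Fin m)))) (Wstar phi0) :=
    HasFDerivAt.comp (g := F) (Wstar phi0) hFd.hasFDerivAt (hasFDerivAt_prodMk_left (𝕜 := ℝ) (Wstar phi0) phi0)
  have hPpart : HasFDerivAt (fun φ : (EuclideanSpace ℝ (Fin m)) => G (Wstar phi0) φ)
      ((fderiv ℝ F p0).comp (inr ℝ (EuclideanSpace ℝ (Fin n)) (EuclideanSpace ℝ (Fin m)))) phi0 :=
    hFd.hasFDerivAt.comp phi0 (hasFDerivAt_prodMk_right (Wstar phi0) phi0)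
  have hHeq : (H : (EuclideanSpace ℝ (Fin n)) →L[ℝ] (EuclideanSpace ℝ (Fin n))) = (fderiv ℝ F p0).comp (inl ℝ (EuclideanSpace ℝ (Fin n)) (EuclideanSpace ℝ (Fin m))) := by
    rw [hH, hWpart.fderiv]
  -- total derivative of φ ↦ F (Wstar φ, φ) is zero
  have hcomp : HasFDerivAt (fun φ => F (Wstar φ, φ))
      ((fderiv ℝ F p0).comp ((fderiv ℝ Wstar phi0).prod (ContinuousLinearMap.id ℝ (EuclideanSpace ℝ (Fin m)))))
      phi0 :=
    by
      have hin : HasFDerivAt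
          (fun φ : (EuclideanSpace ℝ (Fin m)) =>
            ((Wstar φ, φ) : (EuclideanSpace ℝ (Fin n)) × (EuclideanSpace ℝ (Fin m))))
          ((fderiv ℝ Wstar phi0).prod (ContinuousLinearMap.id ℝ (EuclideanSpace ℝ (Fin m))))
          phi0 := HasFDerivAt.prodMk hWdiff.hasFDerivAt (hasFDerivAt_id phi0)
      exact HasFDerivAt.comp (g := F) (f := fun φ => (Wstar φ, φ)) phi0 hFd.hasFDerivAt hin
  have hzero : (fderiv ℝ F p0).comp
      ((fderiv ℝ Wstar phi0).prod (ContinuousLinearMap.id ℝ (EuclideanSpace ℝ (Fin m)))) = 0 := by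
    rw [← hcomp.fderiv]
    have hev : (fun φ => F (Wstar φ, φ)) =ᶠ[nhds phi0] fun _ => (0 : (EuclideanSpace ℝ (Fin n))) :=
      hstat.mono fun φ h => h
    rw [hev.fderiv_eq, fderiv_fun_const]
    rfl
  -- key formula for fderiv Wstar
  have hkey : ∀ v : (EuclideanSpace ℝ (Fin m)), fderiv ℝ Wstar phi0 v =
      - H.symm ((fderiv ℝ F p0) (inr ℝ (EuclideanSpace ℝ (Fin n)) (EuclideanSpace ℝ (Fin m)) v)) := by
    intro v
    have h0 : fderiv ℝ F p0 (fderiv ℝ Wstar phi0 v, v) = 0 := by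
      have := congrFun (congrArg DFunLike.coe hzero) v
      simpa using this
    have hsplit : ((fderiv ℝ Wstar phi0 v, v) : (EuclideanSpace ℝ (Fin n)) × (EuclideanSpace ℝ (Fin m))) =
        (inl ℝ (EuclideanSpace ℝ (Fin n)) (EuclideanSpace ℝ (Fin m))) (fderiv ℝ Wstar phi0 v) + (inr ℝ (EuclideanSpace ℝ (Fin n)) (EuclideanSpace ℝ (Fin m))) v := by
      simp [Prod.ext_iff]
    rw [hsplit, map_add] at h0
    have hHv : (H : (EuclideanSpace ℝ (Fin n)) →L[ℝ] (EuclideanSpace ℝ (Fin n))) (fderiv ℝ Wstar phi0 v)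
        + fderiv ℝ F p0 ((inr ℝ (EuclideanSpace ℝ (Fin n)) (EuclideanSpace ℝ (Fin m))) v) = 0 := by
      rw [hHeq]; exact h0
    have hneg : (H : (EuclideanSpace ℝ (Fin n)) →L[ℝ] (EuclideanSpace ℝ (Fin n))) (fderiv ℝ Wstar phi0 v)
        = - fderiv ℝ F p0 ((inr ℝ (EuclideanSpace ℝ (Fin n)) (EuclideanSpace ℝ (Fin m))) v) := by
      linear_combination (norm := module) hHv
    calc fderiv ℝ Wstar phi0 v
        = H.symm ((H : (EuclideanSpace ℝ (Fin n)) →L[ℝ] (EuclideanSpace ℝ (Fin n))) (fderiv ℝ Wstar phi0 v)) := (H.symm_apply_apply _).symm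
      _ = H.symm (- fderiv ℝ F p0 ((inr ℝ (EuclideanSpace ℝ (Fin n)) (EuclideanSpace ℝ (Fin m))) v)) := by rw [hneg]
      _ = - H.symm (fderiv ℝ F p0 ((inr ℝ (EuclideanSpace ℝ (Fin n)) (EuclideanSpace ℝ (Fin m))) v)) := map_neg _ _
  have hdiff : DifferentiableAt ℝ (fun φ => LA (Wstar φ)) phi0 := hLA.comp phi0 hWdiff
  refine ⟨hdiff, fun v => ?_⟩
  have hchain : fderiv ℝ (fun φ => LA (Wstar φ)) phi0 =
      (fderiv ℝ LA (Wstar phi0)).comp (fderiv ℝ Wstar phi0) :=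
    fderiv_comp phi0 hLA hWdiff
  have hinner : ∀ u : (EuclideanSpace ℝ (Fin n)), fderiv ℝ LA (Wstar phi0) u = ⟪gradient LA (Wstar phi0), u⟫ := by
    intro u
    unfold gradient
    rw [InnerProductSpace.toDual_symm_apply]
  rw [hchain]
  rw [ContinuousLinearMap.comp_apply, hinner, hkey v]
  rw [hPpart.fderiv]
  simp [inner_neg_right]
end

section
/- (Proposition 1.) Let L_main, L_aux : ℝ^n → ℝ be twice continuously differentiable, let L_A : ℝ^n → ℝ be differentiable, and define the training loss L_T(W, φ) = L_main(W) + φ·L_aux(W) for φ ∈ ℝ. Suppose W* : ℝ → ℝ^n is differentiable at 0, satisfies ∇L_main(W*(φ)) + φ·∇L_aux(W*(φ)) = 0 for all φ in a neighborhood of 0, and the Hessian H of L_main at W₀ := W*(0) is invertible. Then d/dφ L_A(W*(φ)) at φ = 0 equals −⟨∇L_A(W₀), H⁻¹ ∇L_aux(W₀)⟩; moreover ∇L_main(W₀) = 0, so H⁻¹ ∇L_aux(W₀) equals the Newton update H⁻¹ ∇_W(L_main + L_aux)(W₀) of the training loss with the auxiliary included at weight 1. -/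
open scoped RealInnerProductSpace

/-- Proposition 1: For `L_T(W, φ) = L_main(W) + φ·L_aux(W)` with
stationary-point map `W*` and invertible Hessian `H` of `L_main` at `W₀ = W*(0)`,
`d/dφ L_A(W*(φ))|₀ = −⟨∇L_A(W₀), H⁻¹ ∇L_aux(W₀)⟩`; moreover `∇L_main(W₀) = 0`, so
`H⁻¹ ∇L_aux(W₀)` equals the Newton update `H⁻¹ ∇(L_main + L_aux)(W₀)`. -/
theorem stmt_4 (n : ℕ)
    (Lmain Laux : EuclideanSpace ℝ (Fin n) → ℝ)
    (LA : EuclideanSpace ℝ (Fin n) → ℝ)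
    (hmain : ContDiff ℝ 2 Lmain) (haux : ContDiff ℝ 2 Laux)
    (hLA : Differentiable ℝ LA)
    (Wstar : ℝ → EuclideanSpace ℝ (Fin n))
    (hWdiff : DifferentiableAt ℝ Wstar 0)
    (hstat : ∀ᶠ φ in nhds (0 : ℝ),
      gradient Lmain (Wstar φ) + φ • gradient Laux (Wstar φ) = 0)
    (H : EuclideanSpace ℝ (Fin n) ≃L[ℝ] EuclideanSpace ℝ (Fin n))
    (hH : (H : EuclideanSpace ℝ (Fin n) →L[ℝ] EuclideanSpace ℝ (Fin n)) =
      fderiv ℝ (gradient Lmain) (Wstar 0)) :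
    deriv (fun φ => LA (Wstar φ)) 0 =
      - ⟪gradient LA (Wstar 0), H.symm (gradient Laux (Wstar 0))⟫ ∧
    gradient Lmain (Wstar 0) = 0 ∧
    H.symm (gradient Laux (Wstar 0)) =
      H.symm (gradient (fun W => Lmain W + Laux W) (Wstar 0)) := by
  -- stationarity at 0
  have h0 : gradient Lmain (Wstar 0) = 0 := by
    have := hstat.self_of_nhds
    simpa using this
  -- gradients are differentiable
  have hgradmain : Differentiable ℝ (gradient Lmain) := by
    have h1 : ContDiff ℝ 1 (fderiv ℝ Lmain) := hmain.fderiv_right (le_refl _)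
    exact (InnerProductSpace.toDual ℝ
      (EuclideanSpace ℝ (Fin n))).symm.toContinuousLinearEquiv.differentiable.comp
      (h1.differentiable one_ne_zero)
  have hgradaux : Differentiable ℝ (gradient Laux) := by
    have h1 : ContDiff ℝ 1 (fderiv ℝ Laux) := haux.fderiv_right (le_refl _)
    exact (InnerProductSpace.toDual ℝ
      (EuclideanSpace ℝ (Fin n))).symm.toContinuousLinearEquiv.differentiable.comp
      (h1.differentiable one_ne_zero)
  have hWd : HasDerivAt Wstar (deriv Wstar 0) 0 := hWdiff.hasDerivAt
  set u := deriv Wstar 0 with hu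
  -- derivative of the stationarity equation
  have hterm1 : HasDerivAt (fun φ => gradient Lmain (Wstar φ))
      (fderiv ℝ (gradient Lmain) (Wstar 0) u) 0 :=
    ((hgradmain (Wstar 0)).hasFDerivAt).comp_hasDerivAt 0 hWd
  have hterm2 : HasDerivAt (fun φ => gradient Laux (Wstar φ))
      (fderiv ℝ (gradient Laux) (Wstar 0) u) 0 :=
    ((hgradaux (Wstar 0)).hasFDerivAt).comp_hasDerivAt 0 hWd
  have hterm2' : HasDerivAt (fun φ : ℝ => φ • gradient Laux (Wstar φ))
      ((0 : ℝ) • fderiv ℝ (gradient Laux) (Wstar 0) u + (1 : ℝ) • gradient Laux (Wstar 0)) 0 :=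
    (hasDerivAt_id (0 : ℝ)).smul hterm2
  have hg : HasDerivAt (fun φ => gradient Lmain (Wstar φ) + φ • gradient Laux (Wstar φ))
      (fderiv ℝ (gradient Lmain) (Wstar 0) u +
        ((0 : ℝ) • fderiv ℝ (gradient Laux) (Wstar 0) u + (1 : ℝ) • gradient Laux (Wstar 0))) 0 :=
    hterm1.add hterm2'
  have hg0 : HasDerivAt (fun φ => gradient Lmain (Wstar φ) + φ • gradient Laux (Wstar φ))
      (0 : EuclideanSpace ℝ (Fin n)) 0 := by
    have hc : HasDerivAt (fun _ : ℝ => (0 : EuclideanSpace ℝ (Fin n))) 0 (0 : ℝ) :=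
      hasDerivAt_const 0 0
    exact hc.congr_of_eventuallyEq (hstat.mono fun φ h => h)
  have hkey : fderiv ℝ (gradient Lmain) (Wstar 0) u + gradient Laux (Wstar 0) = 0 := by
    have := hg.unique hg0
    simpa using this
  have hHu : H u = - gradient Laux (Wstar 0) := by
    have h1 : (H : EuclideanSpace ℝ (Fin n) →L[ℝ] EuclideanSpace ℝ (Fin n)) u
        = fderiv ℝ (gradient Lmain) (Wstar 0) u := by rw [hH]
    rw [show H u = (H : EuclideanSpace ℝ (Fin n) →L[ℝ] EuclideanSpace ℝ (Fin n)) u from rfl,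
      h1, eq_neg_iff_add_eq_zero]
    exact hkey
  have husymm : H.symm (gradient Laux (Wstar 0)) = -u := by
    have h2 : H.symm (H u) = H.symm (- gradient Laux (Wstar 0)) := by rw [hHu]
    simp only [ContinuousLinearEquiv.symm_apply_apply, map_neg] at h2
    rw [h2, neg_neg]
  refine ⟨?_, h0, ?_⟩
  · -- chain rule for LA
    have hLAgrad : HasGradientAt LA (gradient LA (Wstar 0)) (Wstar 0) := (hLA _).hasGradientAt
    have hLAd : HasDerivAt (fun φ => LA (Wstar φ))
        ((InnerProductSpace.toDual ℝ (EuclideanSpace ℝ (Fin n)) (gradient LA (Wstar 0))) u) 0 :=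
      hLAgrad.hasFDerivAt.comp_hasDerivAt 0 hWd
    rw [hLAd.deriv, InnerProductSpace.toDual_apply_apply, husymm, inner_neg_right, neg_neg]
  · -- gradient of sum
    have hsum : gradient (fun W => Lmain W + Laux W) (Wstar 0)
        = gradient Lmain (Wstar 0) + gradient Laux (Wstar 0) := by
      unfold gradient
      rw [fderiv_fun_add ((hmain.differentiable two_ne_zero) (Wstar 0))
        ((haux.differentiable two_ne_zero) (Wstar 0)), map_add]
    rw [hsum, h0, zero_add]
end

section
/- Let ℓ₁, …, ℓ_K : ℝ^n → ℝ and L_main : ℝ^n → ℝ be twice continuously differentiable, and define the training loss L_T(W, φ) = L_main(W) + Σ_{j=1}^K φ_j·ℓ_j(W) for φ ∈ ℝ^K. Let L_A : ℝ^n → ℝ be differentiable. Suppose W* : ℝ^K → ℝ^n is differentiable at φ̂, the W-gradient of L_T vanishes at (W*(φ), φ) for all φ in a neighborhood of φ̂, and the Hessian H of W ↦ L_T(W, φ̂) at W*(φ̂) is invertible. Then for each j = 1, …, K, the partial derivative of φ ↦ L_A(W*(φ)) in the j-th coordinate at φ̂ equals −⟨∇L_A(W*(φ̂)), H⁻¹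 ∇ℓ_j(W*(φ̂))⟩. -/
open scoped RealInnerProductSpace
open InnerProductSpace

lemma grad_combo {F : Type*} [NormedAddCommGroup F] [InnerProductSpace ℝ F] [CompleteSpace F]
    {K : ℕ} (Lmain : F → ℝ) (ℓ : Fin K → F → ℝ)
    (hmain : Differentiable ℝ Lmain) (hℓ : ∀ j, Differentiable ℝ (ℓ j))
    (φ : EuclideanSpace ℝ (Fin K)) (x : F) :
    gradient (fun W => Lmain W + ∑ j, φ j * ℓ j W) x =
      gradient Lmain x + ∑ j, φ j • gradient (ℓ j) x := by
  have h1 : HasFDerivAt (fun W => Lmain W + ∑ j, φ j * ℓ j W)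
      (toDual ℝ F (gradient Lmain x) + ∑ j, φ j • toDual ℝ F (gradient (ℓ j) x)) x := by
    refine ((hmain.differentiableAt.hasGradientAt).hasFDerivAt).add ?_
    exact HasFDerivAt.fun_sum fun j _ =>
      ((hℓ j).differentiableAt.hasGradientAt.hasFDerivAt).const_mul (φ j)
  have h2 : HasGradientAt (fun W => Lmain W + ∑ j, φ j * ℓ j W)
      (gradient Lmain x + ∑ j, φ j • gradient (ℓ j) x) x := by
    rw [hasGradientAt_iff_hasFDerivAt]
    convert h1 using 1
    · rfl
    · simp [map_add, map_sum, map_smul]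
  exact h2.gradient

lemma grad_diffAt {F : Type*} [NormedAddCommGroup F] [InnerProductSpace ℝ F]
    [CompleteSpace F] {f : F → ℝ} (hf : ContDiff ℝ 2 f) (x : F) :
    DifferentiableAt ℝ (gradient f) x := by
  have h1 : ContDiff ℝ 1 (fderiv ℝ f) := hf.fderiv_right (by norm_num)
  have : gradient f = fun y => (toDual ℝ F).symm (fderiv ℝ f y) := rfl
  rw [this]
  exact ((toDual ℝ F).symm.toContinuousLinearEquiv.toContinuousLinearMap.differentiable.comp
    (h1.differentiable (by norm_num))).differentiableAt

/-- For the linearly combined training loss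
`L_T(W, φ) = L_main(W) + Σ_j φ_j ℓ_j(W)` with stationary-point map `W*` and
invertible Hessian `H` of `W ↦ L_T(W, φ₀)` at `W*(φ₀)`, the `j`-th partial
derivative of `φ ↦ L_A(W*(φ))` at `φ₀` equals
`−⟪∇L_A(W*(φ₀)), H⁻¹ ∇ℓ_j(W*(φ₀))⟫`. -/
theorem stmt_5 (n K : ℕ)
    (Lmain : EuclideanSpace ℝ (Fin n) → ℝ)
    (ℓ : Fin K → EuclideanSpace ℝ (Fin n) → ℝ)
    (LA : EuclideanSpace ℝ (Fin n) → ℝ)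
    (hmain : ContDiff ℝ 2 Lmain) (hℓ : ∀ j, ContDiff ℝ 2 (ℓ j))
    (hLA : Differentiable ℝ LA)
    (Wstar : EuclideanSpace ℝ (Fin K) → EuclideanSpace ℝ (Fin n))
    (phi0 : EuclideanSpace ℝ (Fin K))
    (hWdiff : DifferentiableAt ℝ Wstar phi0)
    (hstat : ∀ᶠ φ in nhds phi0,
      gradient (fun W => Lmain W + ∑ j, φ j * ℓ j W) (Wstar φ) = 0)
    (H : EuclideanSpace ℝ (Fin n) ≃L[ℝ] EuclideanSpace ℝ (Fin n))
    (hH : (H : EuclideanSpace ℝ (Fin n) →L[ℝ] EuclideanSpace ℝ (Fin n)) =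
      fderiv ℝ (gradient (fun W => Lmain W + ∑ j, phi0 j * ℓ j W)) (Wstar phi0)) :
    ∀ j : Fin K,
      fderiv ℝ (fun φ => LA (Wstar φ)) phi0 (EuclideanSpace.single j 1) =
        - ⟪gradient LA (Wstar phi0), H.symm (gradient (ℓ j) (Wstar phi0))⟫ := by
  intro j
  set x0 := Wstar phi0 with hx0
  set W' := fderiv ℝ Wstar phi0 with hW'def
  have hDmain : Differentiable ℝ Lmain := hmain.differentiable (by norm_num)
  have hDℓ : ∀ i, Differentiable ℝ (ℓ i) := fun i => (hℓ i).differentiable (by norm_num)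
  have hg0 : DifferentiableAt ℝ (gradient Lmain) x0 := grad_diffAt hmain x0
  have hgj : ∀ i, DifferentiableAt ℝ (gradient (ℓ i)) x0 := fun i => grad_diffAt (hℓ i) x0
  set D0 := fderiv ℝ (gradient Lmain) x0 with hD0def
  set Dg : Fin K → _ := fun i => fderiv ℝ (gradient (ℓ i)) x0 with hDgdef
  -- Step 1: H = D0 + ∑ phi0 i • Dg i
  have hcombo : (fun W => gradient Lmain W + ∑ i, phi0 i • gradient (ℓ i) W)
      = gradient (fun W => Lmain W + ∑ i, phi0 i * ℓ i W) := by
    funext x; rw [grad_combo Lmain ℓ hDmain hDℓ phi0 x]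
  have hHF : HasFDerivAt (fun W => gradient Lmain W + ∑ i, phi0 i • gradient (ℓ i) W)
      (D0 + ∑ i, phi0 i • Dg i) x0 :=
    (hg0.hasFDerivAt).add (HasFDerivAt.fun_sum fun i _ => ((hgj i).hasFDerivAt).const_smul (phi0 i))
  have hHeq : (H : EuclideanSpace ℝ (Fin n) →L[ℝ] EuclideanSpace ℝ (Fin n))
      = D0 + ∑ i, phi0 i • Dg i := by
    rw [hH, ← hcombo]; exact hHF.fderiv
  -- Step 2: derivative of the composite stationarity map
  have hW'A : HasFDerivAt Wstar W' phi0 := hWdiff.hasFDerivAt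
  set D' := D0.comp W' + ∑ i, (phi0 i • ((Dg i).comp W') +
      (EuclideanSpace.proj i : EuclideanSpace ℝ (Fin K) →L[ℝ] ℝ).smulRight
        (gradient (ℓ i) x0)) with hD'def
  have hcomp : HasFDerivAt
      (fun φ => gradient Lmain (Wstar φ) + ∑ i, φ i • gradient (ℓ i) (Wstar φ)) D' phi0 := by
    refine ((hg0.hasFDerivAt).comp phi0 hW'A).add (HasFDerivAt.fun_sum fun i _ => ?_)
    have hc : HasFDerivAt (fun φ : EuclideanSpace ℝ (Fin K) => φ i)
        (EuclideanSpace.proj i : EuclideanSpace ℝ (Fin K) →L[ℝ] ℝ) phi0 :=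
      (EuclideanSpace.proj i : EuclideanSpace ℝ (Fin K) →L[ℝ] ℝ).hasFDerivAt
    exact hc.smul (((hgj i).hasFDerivAt).comp phi0 hW'A)
  have hev : (fun φ => gradient Lmain (Wstar φ) + ∑ i, φ i • gradient (ℓ i) (Wstar φ))
      =ᶠ[nhds phi0] (fun _ => (0 : EuclideanSpace ℝ (Fin n))) := by
    filter_upwards [hstat] with φ hφ
    rw [← grad_combo Lmain ℓ hDmain hDℓ φ (Wstar φ)]; exact hφ
  have hD'zero : D' = 0 := by
    have h1 : fderiv ℝ (fun φ => gradient Lmain (Wstar φ) +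
        ∑ i, φ i • gradient (ℓ i) (Wstar φ)) phi0 = 0 := by
      rw [hev.fderiv_eq]; exact fderiv_const_apply 0
    rw [hcomp.fderiv] at h1; exact h1
  -- Step 3: evaluate at e_j
  set e := EuclideanSpace.single j (1 : ℝ) with hedef
  have key : D0 (W' e) + (∑ i, phi0 i • Dg i (W' e)) + gradient (ℓ j) x0 = 0 := by
    have := congrArg (fun T : EuclideanSpace ℝ (Fin K) →L[ℝ] EuclideanSpace ℝ (Fin n) => T e)
      hD'zero
    simp only [hD'def, ContinuousLinearMap.add_apply, ContinuousLinearMap.coe_sum',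
      Finset.sum_apply, ContinuousLinearMap.coe_smul', Pi.smul_apply,
      ContinuousLinearMap.comp_apply, ContinuousLinearMap.smulRight_apply,
      ContinuousLinearMap.zero_apply, PiLp.proj_apply] at this
    have hsum : ∑ i, (phi0 i • Dg i (W' e) + e i • gradient (ℓ i) x0)
        = (∑ i, phi0 i • Dg i (W' e)) + gradient (ℓ j) x0 := by
      rw [Finset.sum_add_distrib]
      congr 1
      simp [hedef, EuclideanSpace.single_apply, ite_smul]
    rw [hsum] at this
    rw [← add_assoc] at this
    exact this
  have hHval : H (W' e) = - gradient (ℓ j) x0 := by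
    have : (H : EuclideanSpace ℝ (Fin n) →L[ℝ] EuclideanSpace ℝ (Fin n)) (W' e)
        = D0 (W' e) + ∑ i, phi0 i • Dg i (W' e) := by
      rw [hHeq]; simp [ContinuousLinearMap.add_apply]
    rw [ContinuousLinearEquiv.coe_coe] at this
    rw [this]
    exact eq_neg_of_add_eq_zero_left key
  have hWe : W' e = - H.symm (gradient (ℓ j) x0) := by
    have h2 := congrArg H.symm hHval
    rw [H.symm_apply_apply] at h2
    rw [h2, map_neg]
  have hfinal : HasFDerivAt (fun φ => LA (Wstar φ)) ((fderiv ℝ LA x0).comp W') phi0 :=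
    ((hLA x0).hasFDerivAt).comp phi0 hW'A
  rw [hfinal.fderiv]
  have hLAgrad : fderiv ℝ LA x0 = toDual ℝ _ (gradient LA x0) :=
    ((hLA x0).hasGradientAt.hasFDerivAt).fderiv
  simp only [ContinuousLinearMap.comp_apply, ← hedef, hWe, hLAgrad, toDual_apply_apply,
    inner_neg_right]
end

section
/- For every n ∈ ℕ there exist n distinct reals x₁, …, xₙ (one may take x_i = 4^{−i}) such that for every labeling y : Fin n → Bool there exists φ ∈ ℝ with: (i) cos(φ·x_i) > 0 ↔ (y_i = true) for all i; and (ii) φ is the unique global minimizer of the regularized training loss w ↦ ℓ01(w) + (φ − w)², where ℓ01(w) = #{i : (cos(w·x_i) > 0) ≠ y_i}. Hence the learned model W*(φ) := argmin_w [ℓ01(w) + (φ − w)²] realizes every Boolean labeling of {x₁, …, xₙ} as φ ranges over ℝ; i.e., the induced hypothesis class H_φ = {x ↦ ⌈cos(W*(φ)·x)⌉ : φ ∈ ℝ} shatters sets of every finite cardinality and has infinite VC dimension. -/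
lemma geom4 (i : ℕ) : 3 * (∑ j ∈ Finset.range i, 4 ^ j) + 1 = 4 ^ i := by
  induction i with
  | zero => simp
  | succ k ih => rw [Finset.sum_range_succ, pow_succ]; linarith

lemma key (b k : ℕ) (hb : b ≤ 1) (t : ℝ) (ht0 : 0 ≤ t) (ht : t < 1/2) :
    (0 < Real.cos (Real.pi * (2 * k + b + t))) ↔ b = 0 := by
  have hπ := Real.pi_pos
  have h1 : Real.pi * (2 * k + b + t) = (Real.pi * b + Real.pi * t) + (k : ℝ) * (2 * Real.pi) := by
    ring
  rw [h1, Real.cos_add_nat_mul_two_pi]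
  have hc : 0 < Real.cos (Real.pi * t) := by
    apply Real.cos_pos_of_mem_Ioo
    constructor
    · nlinarith
    · nlinarith
  interval_cases b
  · simpa using hc
  · simp only [Nat.cast_one, mul_one]
    rw [add_comm, Real.cos_add_pi]
    constructor
    · intro h; linarith
    · intro h; omega

open Classical in
/-- For every `n` there are `n` distinct reals `x₁, …, xₙ` such that
for every labeling `y` there is `φ ∈ ℝ` with (i) `cos(φ·x_i) > 0 ↔ y_i` for all
`i`, and (ii) `φ` is the unique global minimizer of the regularized training loss
`w ↦ ℓ01(w) + (φ − w)²`, where `ℓ01(w) = #{i : (cos(w·x_i) > 0) ≠ y_i}`. Hence the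
learned model `W*(φ) = argmin_w [ℓ01(w) + (φ − w)²]` realizes every Boolean
labeling of `{x₁, …, xₙ}`, so the induced class `H_φ` has infinite VC dimension. -/
theorem stmt_8 (n : ℕ) :
    ∃ x : Fin n → ℝ, Function.Injective x ∧
      ∀ y : Fin n → Bool, ∃ φ : ℝ,
        (∀ i : Fin n, (0 < Real.cos (φ * x i)) ↔ y i = true) ∧
        ∀ w : ℝ, w ≠ φ →
          ((Finset.univ.filter
              (fun i : Fin n => (0 < Real.cos (φ * x i)) ≠ (y i = true))).card : ℝ)
              + (φ - φ) ^ 2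
            < ((Finset.univ.filter
              (fun i : Fin n => (0 < Real.cos (w * x i)) ≠ (y i = true))).card : ℝ)
              + (φ - w) ^ 2 := by
  refine ⟨fun i => 1 / (4 : ℝ) ^ (i : ℕ), ?_, ?_⟩
  · intro i j h
    field_simp at h
    exact Fin.ext ((pow_right_strictMono₀ (by norm_num : (1:ℝ) < 4)).injective h.symm)
  · intro y
    set b : ℕ → ℕ := fun j => if h : j < n then (if y ⟨j, h⟩ then 0 else 1) else 0 with hb
    have hble : ∀ j, b j ≤ 1 := by
      intro j; simp only [hb]; split <;> [skip; simp]
      split <;> simp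
    set N : ℕ := ∑ j ∈ Finset.range n, b j * 4 ^ j with hN
    refine ⟨Real.pi * N, ?_⟩
    have hiff : ∀ i : Fin n,
        (0 < Real.cos (Real.pi * N * (1 / (4:ℝ) ^ (i : ℕ)))) ↔ y i = true := by
      intro i
      set L : ℕ := ∑ j ∈ Finset.range i.val, b j * 4 ^ j with hL
      set H : ℕ := ∑ k ∈ Finset.range (n - i.val), b (i.val + k) * 4 ^ k with hH
      have h1 : ∑ j ∈ Finset.Ico i.val n, b j * 4 ^ j = 4 ^ i.val * H := by
        rw [Finset.sum_Ico_eq_sum_range, hH, Finset.mul_sum]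
        apply Finset.sum_congr rfl
        intro k _
        rw [pow_add]; ring
      have hsplit : N = 4 ^ i.val * H + L := by
        rw [hN, hL, Finset.range_eq_Ico,
          ← Finset.sum_Ico_consecutive _ (Nat.zero_le i.val) i.isLt.le, h1, add_comm, ← Finset.range_eq_Ico]
      have hmi : n - i.val = (n - i.val - 1) + 1 := by omega
      have hHdec : H = 2 * (∑ k ∈ Finset.range (n - i.val - 1), b (i.val + k + 1) * (2 * 4 ^ k))
          + b i.val := by
        rw [hH, hmi, Finset.sum_range_succ']
        simp only [pow_zero, mul_one, add_zero, Finset.mul_sum]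
        congr 1
        apply Finset.sum_congr rfl
        intro k _
        rw [pow_succ']
        ring_nf
      set M : ℕ := ∑ k ∈ Finset.range (n - i.val - 1), b (i.val + k + 1) * (2 * 4 ^ k) with hM
      have hLb : 2 * L < 4 ^ i.val := by
        have h1 : L ≤ ∑ j ∈ Finset.range i.val, 4 ^ j := by
          apply Finset.sum_le_sum
          intro j _
          have := hble j
          nlinarith [pow_pos (by norm_num : 0 < 4) j]
        have := geom4 i.val
        omega
      have hpow : (0:ℝ) < (4:ℝ) ^ (i.val) := by positivity
      set t : ℝ := (L : ℝ) / (4:ℝ) ^ i.val with ht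
      have ht0 : 0 ≤ t := by positivity
      have ht12 : t < 1/2 := by
        rw [ht, div_lt_iff₀ hpow]
        have : ((2 * L : ℕ) : ℝ) < ((4 ^ i.val : ℕ) : ℝ) := by exact_mod_cast hLb
        push_cast at this
        linarith
      have hNr : (N : ℝ) = (4:ℝ) ^ i.val * (2 * M + b i.val) + L := by
        rw [hsplit, hHdec]; push_cast; ring
      have h5 : (2 * (M:ℝ) + (b i.val : ℝ) + (L:ℝ) / (4:ℝ) ^ i.val) * (4:ℝ) ^ i.val = N := by
        rw [add_mul, div_mul_cancel₀ _ hpow.ne', hNr]; ring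
      have harg : Real.pi * N * (1 / (4:ℝ) ^ (i : ℕ)) =
          Real.pi * (2 * (M : ℝ) + (b i.val : ℝ) + t) := by
        rw [ht, mul_one_div, mul_div_assoc]
        congr 1
        rw [div_eq_iff hpow.ne']
        linarith [h5]
      rw [harg, key (b i.val) M (hble _) t ht0 ht12]
      simp only [hb, dif_pos i.isLt]
      cases hy : y i with
      | true => simp [Fin.eta, hy]
      | false => simp [Fin.eta, hy]
    refine ⟨hiff, ?_⟩
    intro w hw
    have hempty : (Finset.univ.filter
        (fun i : Fin n => (0 < Real.cos (Real.pi * N * (1 / (4:ℝ) ^ (i : ℕ)))) ≠ (y i = true)))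
        = ∅ := by
      apply Finset.filter_false_of_mem
      intro i _
      have := hiff i
      simp only [one_div] at this
      simp [this]
    rw [hempty]
    have h2 : 0 < (Real.pi * N - w) ^ 2 := by
      have : Real.pi * N - w ≠ 0 := sub_ne_zero.mpr (Ne.symm hw)
      positivity
    have h3 : (0:ℝ) ≤ ((Finset.univ.filter
        (fun i : Fin n => (0 < Real.cos (w * (1 / (4:ℝ) ^ (i : ℕ)))) ≠ (y i = true))).card : ℝ) :=
      Nat.cast_nonneg _
    simp only [Finset.card_empty, Nat.cast_zero, sub_self]
    nlinarith
end
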